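/- Let μ > 0. For every x ∈ [0,1], lim_{n → +∞} n (a_{n+1}(x) − x) = (x − x²)/(2(1+μ)). -/

import Mathlib

open MeasureTheory Filter Set

/-- The logarithmic weight `ln_μ(x) = ln(1+μ+x)`. -/
noncomputable def lnMu (μ x : ℝ) : ℝ := Real.log (1 + μ + x)

/-- The function `a_{n+1}(x)` from the paper. -/
noncomputable def aFun (μ : ℝ) (n : ℕ) (x : ℝ) : ℝ :=
  Real.log (1 + x / (((n : ℝ) + 1) * (1 + μ))) /
    Real.log (1 + 1 / (((n : ℝ) + 1) * (1 + μ)))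

/-- Bernstein basis polynomial `p_{n,k}(x) = C(n,k) x^k (1-x)^{n-k}`. -/
noncomputable def bern (n k : ℕ) (x : ℝ) : ℝ :=
  (n.choose k : ℝ) * x ^ k * (1 - x) ^ (n - k)

/-- The Kantorovich logarithmic operator `𝓛ₙᴷ(f,x)`. -/
noncomputable def LK (μ : ℝ) (n : ℕ) (f : ℝ → ℝ) (x : ℝ) : ℝ :=
  lnMu μ x * ∑ k ∈ Finset.range (n + 1),
    bern n k (aFun μ n x) * ((n : ℝ) + 1) *
      ∫ t in ((k : ℝ) / ((n : ℝ) + 1))..(((k : ℝ) + 1) / ((n : ℝ) + 1)), f t / lnMu μ t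

/-- `γ_n := max_{x ∈ [0,1]} |a_{n+1}(x) - x|`. -/
noncomputable def gammaN (μ : ℝ) (n : ℕ) : ℝ :=
  ⨆ x : Set.Icc (0 : ℝ) 1, |aFun μ n (x : ℝ) - (x : ℝ)|

/-- Unweighted L^p norm `(∫₀¹ |f|^p)^(1/p)` on [0,1]. -/
noncomputable def normP (p : ℝ) (f : ℝ → ℝ) : ℝ :=
  (∫ x in (0:ℝ)..1, |f x| ^ p) ^ (1 / p)

/-- Weighted L^p norm `(∫₀¹ |f/ln_μ|^p)^(1/p)` on [0,1]. -/
noncomputable def normPMu (μ p : ℝ) (f : ℝ → ℝ) : ℝ :=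
  (∫ x in (0:ℝ)..1, |f x / lnMu μ x| ^ p) ^ (1 / p)


private lemma stmt2_calc_aux (N t F L : ℝ) (ht : t ≠ 0) (hL : L ≠ 0) :
    N * (F / L) = (N * t) * (F / t^2 * (t / L)) := by
  field_simp

private lemma stmt2_lim1 (x : ℝ) (hx : x ∈ Set.Icc (0:ℝ) 1) :
    Tendsto (fun t : ℝ => (Real.log (1 + x*t) - x * Real.log (1 + t)) / t^2)
      (nhdsWithin 0 (Ioi 0)) (nhds ((x - x^2)/2)) := by
  obtain ⟨hx0, hx1⟩ := hx
  have hpos : ∀ t : ℝ, t ∈ Ioi (0:ℝ) → 0 < 1 + x*t ∧ 0 < 1 + t := by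
    intro t ht
    constructor
    · nlinarith [mem_Ioi.mp ht]
    · linarith [mem_Ioi.mp ht]
  apply HasDerivAt.lhopital_zero_nhdsGT
    (f' := fun t => x/(1+x*t) - x/(1+t)) (g' := fun t => 2*t)
  · filter_upwards [self_mem_nhdsWithin] with t ht
    obtain ⟨h1, h2⟩ := hpos t ht
    have d1 : HasDerivAt (fun t : ℝ => Real.log (1 + x*t)) (x/(1+x*t)) t := by
      have : HasDerivAt (fun t : ℝ => 1 + x*t) x t := by
        simpa using (hasDerivAt_id t).const_mul x |>.const_add 1
      simpa using this.log h1.ne'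
    have d2 : HasDerivAt (fun t : ℝ => x * Real.log (1 + t)) (x/(1+t)) t := by
      have : HasDerivAt (fun t : ℝ => Real.log (1 + t)) (1/(1+t)) t := by
        have h : HasDerivAt (fun t : ℝ => 1 + t) 1 t := by
          simpa using (hasDerivAt_id t).const_add 1
        simpa using h.log h2.ne'
      have := this.const_mul x
      simpa [mul_one_div, div_eq_mul_inv] using this
    exact d1.sub d2
  · filter_upwards [self_mem_nhdsWithin] with t ht
    simpa using (hasDerivAt_pow 2 t)
  · filter_upwards [self_mem_nhdsWithin] with t ht
    have := mem_Ioi.mp ht; positivity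
  · have : ContinuousAt (fun t : ℝ => Real.log (1 + x*t) - x * Real.log (1 + t)) 0 := by
      have c1 : ContinuousAt (fun t : ℝ => Real.log (1 + x*t)) 0 :=
        (Real.continuousAt_log (by norm_num)).comp (by fun_prop)
      have c2 : ContinuousAt (fun t : ℝ => x * Real.log (1 + t)) 0 :=
        ((Real.continuousAt_log (by norm_num)).comp (by fun_prop)).const_smul x
      exact c1.sub c2
    have := this.tendsto.mono_left (nhdsWithin_le_nhds (s := Ioi 0))
    simpa using this
  · have : Tendsto (fun t : ℝ => t^2) (nhds 0) (nhds 0) := by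
      simpa using (continuous_pow 2).tendsto (0:ℝ)
    exact this.mono_left nhdsWithin_le_nhds
  · have key : Tendsto (fun t : ℝ => x*(1-x)/(2*(1+x*t)*(1+t)))
        (nhdsWithin 0 (Ioi 0)) (nhds ((x - x^2)/2)) := by
      have : ContinuousAt (fun t : ℝ => x*(1-x)/(2*(1+x*t)*(1+t))) 0 := by
        apply ContinuousAt.div (by fun_prop) (by fun_prop)
        norm_num
      have := this.tendsto.mono_left (nhdsWithin_le_nhds (s := Ioi 0))
      convert this using 2
      ring
    apply key.congr'
    filter_upwards [self_mem_nhdsWithin] with t ht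
    obtain ⟨h1, h2⟩ := hpos t ht
    have ht0 : t ≠ 0 := (mem_Ioi.mp ht).ne'
    field_simp
    ring

private lemma stmt2_lim2 :
    Tendsto (fun t : ℝ => Real.log (1 + t) / t) (nhdsWithin 0 (Ioi 0)) (nhds 1) := by
  have h : HasDerivAt (fun t : ℝ => Real.log (1 + t)) 1 0 := by
    have h : HasDerivAt (fun t : ℝ => 1 + t) 1 0 := by
      simpa using (hasDerivAt_id (0:ℝ)).const_add 1
    simpa using h.log (by norm_num)
  have h2 := hasDerivAt_iff_tendsto_slope.mp h
  have hsub : nhdsWithin (0:ℝ) (Ioi 0) ≤ nhdsWithin 0 {(0:ℝ)}ᶜ :=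
    nhdsWithin_mono 0 (fun t ht => mem_compl_singleton_iff.mpr (mem_Ioi.mp ht).ne')
  have h3 := h2.mono_left hsub
  apply h3.congr
  intro t
  simp [slope_def_field, div_eq_mul_inv]

theorem stmt2 (μ : ℝ) (hμ : 0 < μ) (x : ℝ) (hx : x ∈ Set.Icc (0:ℝ) 1) :
    Tendsto (fun n : ℕ => (n : ℝ) * (aFun μ n x - x)) atTop
      (nhds ((x - x ^ 2) / (2 * (1 + μ)))) := by
  have lim1 := stmt2_lim1 x hx
  have lim2 := stmt2_lim2
  set c : ℝ := 1 + μ with hc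
  have hc0 : (0:ℝ) < c := by linarith
  set T : ℕ → ℝ := fun n => 1 / (((n:ℝ) + 1) * c) with hT
  have hTpos : ∀ n, 0 < T n := by
    intro n; apply div_pos one_pos; positivity
  set h : ℝ → ℝ := fun t => (Real.log (1 + x*t) - x * Real.log (1 + t)) / t^2
      * (t / Real.log (1 + t)) with hh
  have lim2' : Tendsto (fun t : ℝ => t / Real.log (1 + t)) (nhdsWithin 0 (Ioi 0)) (nhds 1) := by
    have := lim2.inv₀ one_ne_zero
    simp only [inv_one] at this
    apply this.congr
    intro t; simp [div_eq_mul_inv]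
  have limh : Tendsto h (nhdsWithin 0 (Ioi 0)) (nhds ((x - x^2)/2)) := by
    have := lim1.mul lim2'
    simpa using this
  have hTlim : Tendsto T atTop (nhdsWithin 0 (Ioi 0)) := by
    apply tendsto_nhdsWithin_of_tendsto_nhds_of_eventually_within
    · have ha : Tendsto (fun n : ℕ => ((n:ℝ) + 1) * c) atTop atTop :=
        (tendsto_natCast_atTop_atTop.atTop_add tendsto_const_nhds).atTop_mul_const hc0
      have := ha.inv_tendsto_atTop
      apply this.congr
      intro n; simp [hT]
    · exact Eventually.of_forall fun n => hTpos n
  have hnT : Tendsto (fun n : ℕ => (n:ℝ) * T n) atTop (nhds (1/c)) := by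
    have h1 : Tendsto (fun n : ℕ => (n:ℝ) / ((n:ℝ) + 1)) atTop (nhds 1) :=
      tendsto_natCast_div_add_atTop (1:ℝ)
    have h2 := h1.mul (tendsto_const_nhds (x := 1/c))
    simp only [one_mul] at h2
    apply h2.congr
    intro n
    have : ((n:ℝ) + 1) ≠ 0 := by positivity
    simp only [hT]
    field_simp
  have key : ∀ n : ℕ, (n : ℝ) * (aFun μ n x - x) = ((n:ℝ) * T n) * h (T n) := by
    intro n
    have ht0 : T n ≠ 0 := (hTpos n).ne'
    have hL : Real.log (1 + T n) ≠ 0 := by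
      apply ne_of_gt
      apply Real.log_pos
      linarith [hTpos n]
    have hx' : x / (((n:ℝ) + 1) * c) = x * T n := by rw [hT]; ring
    have h1' : (1:ℝ) / (((n:ℝ) + 1) * c) = T n := rfl
    have e : aFun μ n x - x
        = (Real.log (1 + x * T n) - x * Real.log (1 + T n)) / Real.log (1 + T n) := by
      rw [aFun, hx', h1', sub_div]
      congr 1
      rw [mul_div_assoc, div_self hL, mul_one]
    rw [e]
    exact stmt2_calc_aux _ _ _ _ ht0 hL
  rw [show (x - x^2) / (2*(1+μ)) = (1/c) * ((x - x^2)/2) by rw [hc]; field_simp]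
  exact Tendsto.congr (fun n => (key n).symm) (hnT.mul (limh.comp hTlim))
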